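/- Let C and C' be smooth projective curves of genus at least 2 over F_q, with fixed Abel–Jacobi embeddings into their Jacobians. Suppose ψ : J_C(\bar{F}_q) → J_{C'}(\bar{F}_q) is a bijection restricting to a group isomorphism J_C(F_{q^n}) → J_{C'}(F_{q^n}) for every n ≥ 1, and suppose that for every n and every character χ of J_C(F_{q^n}) the L-functions satisfy L(t, C⊗F_{q^n}, χ) = L(t, C'⊗F_{q^n}, χ∘ψ^{-1}). Then ψ(C(F_{q^n})) = C'(F_{q^n}) for all n ≥ 1. -/

import Mathlib

open Finsupp Function

/-- Abstract model of a smooth projective geometrically irreducible curve over a finite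
field `F_q`, recorded via its set of closed points, their degrees, its genus, and the
subgroup of principal divisors (divisors of rational functions) inside the divisor group
(the free abelian group on closed points). -/
structure AlgCurve : Type 1 where
  /-- closed points of the curve -/
  Point : Type
  /-- degree of a closed point (residue field degree over `F_q`) -/
  deg : Point → ℕ+
  /-- the genus of the curve -/
  genus : ℕ
  /-- the subgroup of principal divisors -/
  Principal : AddSubgroup (Point →₀ ℤ)
  /-- a principal divisor has degree zero -/
  principal_degree_zero : ∀ D ∈ Principal, (D.sum fun P n => n * (deg P : ℤ)) = 0
  /-- over a finite field there are finitely many effective divisors of each degree -/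
  finEff : ∀ d : ℤ,
    {D : Point →₀ ℤ | (∀ P, 0 ≤ D P) ∧ (D.sum fun P n => n * (deg P : ℤ)) = d}.Finite

namespace AlgCurve

variable (C : AlgCurve)

/-- Divisors on `C`: the free abelian group on the closed points. -/
abbrev Divisor := C.Point →₀ ℤ

/-- The degree homomorphism on divisors. -/
noncomputable def degree : Divisor C →+ ℤ :=
  Finsupp.liftAddHom fun P => AddMonoidHom.mk' (fun n => n * (C.deg P : ℤ)) (by
    intro a b; ring)

lemma degree_eq_sum (D : Divisor C) :
    C.degree D = D.sum fun P n => n * (C.deg P : ℤ) := by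
  simp [degree, Finsupp.liftAddHom_apply, Finsupp.sum]


@[simp] lemma degree_single (P : C.Point) (n : ℤ) :
    C.degree (Finsupp.single P n) = n * (C.deg P : ℤ) := by
  simp [degree_eq_sum, Finsupp.sum_single_index]

/-- A divisor is effective if all its coefficients are nonnegative. -/
def Effective (D : Divisor C) : Prop := ∀ P, 0 ≤ D P

/-- Two divisors are linearly equivalent if they differ by a principal divisor. -/
def LinEquiv (D D' : Divisor C) : Prop := D - D' ∈ C.Principal

/-- The divisor class group (Picard group) of `C`. -/
abbrev Cl := (C.Point →₀ ℤ) ⧸ C.Principal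

/-- The degree homomorphism on the divisor class group. -/
noncomputable def degCl : C.Cl →+ ℤ :=
  QuotientAddGroup.lift C.Principal C.degree (by
    intro D hD
    simp only [AddMonoidHom.mem_ker, degree_eq_sum]
    exact C.principal_degree_zero D hD)

/-- The class of a divisor in the Picard group. -/
noncomputable abbrev cl (D : Divisor C) : C.Cl := QuotientAddGroup.mk D

@[simp] lemma degCl_cl (D : Divisor C) : C.degCl (C.cl D) = C.degree D := rfl

/-- The group of degree zero divisor classes: the group `J_C(F_q)` of rational points of the
Jacobian of `C`. -/
noncomputable abbrev Pic0 : AddSubgroup C.Cl := C.degCl.ker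

/-- The degree-zero class of a degree-zero divisor, as an element of `Pic0`. -/
noncomputable def cls (D : Divisor C) (h : C.degree D = 0) : C.Pic0 :=
  ⟨C.cl D, by simpa using h⟩

/-- The set of effective divisors of a given degree (finite, by `finEff`). -/
noncomputable def effOfDeg (d : ℤ) : Finset (Divisor C) :=
  (C.finEff d).toFinset.filter fun _ => True

lemma mem_effOfDeg {d : ℤ} {D : Divisor C} :
    D ∈ C.effOfDeg d ↔ C.Effective D ∧ C.degree D = d := by
  simp [effOfDeg, Set.Finite.mem_toFinset, Effective, degree_eq_sum]

/-- The L-function `L(t, C, χ) = Σ_{D ≥ 0} χ([D - deg(D)·D₁]) t^{deg D}` attached to a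
function `χ` on the group of degree-zero divisor classes and a degree one divisor `D₁`. -/
noncomputable def Lfun (D1 : Divisor C) (h1 : C.degree D1 = 1) (χ : C.Pic0 → ℂ) :
    PowerSeries ℂ :=
  PowerSeries.mk fun d =>
    ∑ D ∈ (C.effOfDeg d).attach,
      χ (C.cls (D.1 - (d : ℤ) • D1) (by
        have := (C.mem_effOfDeg.mp D.2).2
        simp [map_sub, this, h1, mul_comm]))

end AlgCurve

open AlgCurve

/-- The system of constant field extensions `C ⊗ F_{q^n}` of a smooth projective curve `C`
over `F_q`, with the (base changes of a) fixed degree-one divisor `D₁` furnishing the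
Abel–Jacobi embeddings, and the group `Jbar = J_C(F̄_q)` of geometric points of the Jacobian
as the union of the groups `J_C(F_{q^n}) = Pic⁰(C ⊗ F_{q^n})`. -/
structure CurveSystem : Type 1 where
  /-- the curve `C ⊗ F_{q^n}` -/
  C : ℕ+ → AlgCurve
  /-- the fixed degree-one divisor `D₁` (base changed to `F_{q^n}`) -/
  D1 : ∀ n, Divisor (C n)
  deg_D1 : ∀ n, (C n).degree (D1 n) = 1
  /-- the geometric points `J_C(F̄_q)` of the Jacobian -/
  Jbar : Type
  [grp : AddCommGroup Jbar]
  /-- the inclusion of `J_C(F_{q^n}) = Pic⁰(C ⊗ F_{q^n})` into `J_C(F̄_q)` -/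
  ι : ∀ n, (C n).Pic0 →+ Jbar
  ι_inj : ∀ n, Function.Injective (ι n)
  /-- compatibility of the inclusions `J_C(F_{q^n}) ≤ J_C(F_{q^m})` for `n ∣ m` -/
  mono : ∀ {n m : ℕ+}, n ∣ m → (ι n).range ≤ (ι m).range
  /-- every geometric point of the Jacobian is rational over some `F_{q^n}` -/
  cover : ∀ x : Jbar, ∃ n y, ι n y = x

attribute [instance] CurveSystem.grp

/-- The image `C(F_{q^n}) ⊆ J_C(F̄_q)` of the `F_{q^n}`-rational points of the curve under
the Abel-Jacobi embedding `P ↦ [P - D₁]`. -/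
noncomputable def CurveSystem.curvePts (S : CurveSystem) (n : ℕ+) : Set S.Jbar :=
  {x | ∃ (P : (S.C n).Point) (h : (S.C n).deg P = 1),
    x = S.ι n ((S.C n).cls (Finsupp.single P 1 - S.D1 n)
      (by simp [h, S.deg_D1 n]))}

/-! ### Auxiliary material: characters of abelian groups separate points, and
Dedekind-style linear independence of characters lets one recover a multiset of group
elements from its character sums. -/

section CharacterTools

open Complex

/-- The exponential map `q ↦ exp(2πiq)` on `ℚ`, valued in `ℂˣ` (written additively). -/
noncomputable def ratExpHom : ℚ →+ Additive ℂˣ :=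
  AddMonoidHom.mk' (fun q => Additive.ofMul (Units.mk0
      (Complex.exp (2 * Real.pi * Complex.I * (q : ℂ))) (Complex.exp_ne_zero _))) (by
    intro a b
    apply Additive.toMul.injective
    apply Units.ext
    show Complex.exp _ = (_ * _ : ℂˣ)
    rw [Units.val_mul]
    show _ = Complex.exp _ * Complex.exp _
    rw [← Complex.exp_add]
    push_cast
    ring_nf)

lemma ratExpHom_one : ratExpHom (1 : ℚ) = 0 := by
  apply Additive.toMul.injective
  apply Units.ext
  show Complex.exp _ = ((1 : ℂˣ) : ℂ)
  push_cast
  rw [mul_one]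
  exact Complex.exp_two_pi_mul_I

/-- The induced character of the rational circle group `ℚ/ℤ`. -/
noncomputable def circleExpHom : AddCircle (1 : ℚ) →+ Additive ℂˣ :=
  QuotientAddGroup.lift (AddSubgroup.zmultiples (1 : ℚ)) ratExpHom (by
    intro q hq
    obtain ⟨n, rfl⟩ := AddSubgroup.mem_zmultiples_iff.mp hq
    simp only [AddMonoidHom.mem_ker, map_zsmul, ratExpHom_one, smul_zero])

lemma circleExpHom_eq_zero {x : AddCircle (1 : ℚ)} (h : circleExpHom x = 0) : x = 0 := by
  induction x using QuotientAddGroup.induction_on with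
  | H q =>
    have hq : ratExpHom q = 0 := h
    have h1 : Complex.exp (2 * Real.pi * Complex.I * (q : ℂ)) = 1 :=
      congrArg (fun u => ((Additive.toMul u : ℂˣ) : ℂ)) hq
    obtain ⟨n, hn⟩ := Complex.exp_eq_one_iff.mp h1
    have h2 : (q : ℂ) = (n : ℂ) :=
      mul_left_cancel₀ Complex.two_pi_I_ne_zero (hn.trans (mul_comm _ _))
    have h3 : q = (n : ℚ) := by exact_mod_cast h2
    show (q : AddCircle (1 : ℚ)) = 0
    rw [AddCircle.coe_eq_zero_iff]
    exact ⟨n, by rw [zsmul_one, h3]⟩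

/-- Complex characters of any abelian group separate points. -/
lemma exists_addChar_ne_one {G : Type*} [AddCommGroup G] {a : G} (ha : a ≠ 0) :
    ∃ χ : AddChar G ℂ, χ a ≠ 1 := by
  obtain ⟨c, hc⟩ := CharacterModule.exists_character_apply_ne_zero_of_ne_zero ha
  refine ⟨{ toFun := fun g => ((Additive.toMul (circleExpHom (c g)) : ℂˣ) : ℂ)
            map_zero_eq_one' := ?_
            map_add_eq_mul' := ?_ }, ?_⟩
  · simp [map_zero]
  · intro x y
    show ((Additive.toMul (circleExpHom (c (x + y))) : ℂˣ) : ℂ) = _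
    rw [map_add c, map_add circleExpHom]
    rfl
  · intro h1
    apply hc
    apply circleExpHom_eq_zero
    apply Additive.toMul.injective
    apply Units.ext
    exact h1

/-- Values of a complex character are nonzero. -/
lemma addChar_ne_zero {G : Type*} [AddCommGroup G] (χ : AddChar G ℂ) (b : G) : χ b ≠ 0 := by
  have hmul : χ b * χ (-b) = 1 := by
    rw [← AddChar.map_add_eq_mul, add_neg_cancel, AddChar.map_zero_eq_one]
  exact left_ne_zero_of_mul_eq_one hmul

/-- A multiset in an abelian group is determined by its complex character sums
(Dedekind's linear independence of characters). -/
lemma multiset_eq_of_addChar_sum_eq {G : Type*} [AddCommGroup G] {M N : Multiset G}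
    (h : ∀ χ : AddChar G ℂ, ((M.map fun a => χ a).sum) = ((N.map fun a => χ a).sum)) :
    M = N := by
  classical
  set Φ : G → ((AddChar G ℂ) →* ℂ) := fun a =>
    { toFun := fun χ => χ a
      map_one' := rfl
      map_mul' := fun _ _ => rfl } with hΦdef
  have hΦ : Function.Injective Φ := by
    intro a b hab
    by_contra hne
    obtain ⟨χ, hχ⟩ := exists_addChar_ne_one (sub_ne_zero.mpr hne)
    have h1 : χ a = χ b := DFunLike.congr_fun hab χ
    have h2 : χ (a - b) * χ b = χ a := by
      rw [← AddChar.map_add_eq_mul]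
      congr 1
      abel
    apply hχ
    have hb := addChar_ne_zero χ b
    have h3 : χ (a - b) * χ b = 1 * χ b := by rw [h2, h1, one_mul]
    exact mul_right_cancel₀ hb h3
  have li : LinearIndependent ℂ ((fun f : (AddChar G ℂ) →* ℂ => (f : AddChar G ℂ → ℂ)) ∘ Φ) :=
    (linearIndependent_monoidHom (AddChar G ℂ) ℂ).comp Φ hΦ
  rw [linearIndependent_iff'] at li
  set s : Finset G := (M + N).toFinset with hs
  have hsum : ∀ (K : Multiset G), K.toFinset ⊆ s → ∀ χ : AddChar G ℂ,
      (K.map fun a => χ a).sum = ∑ a ∈ s, (K.count a : ℂ) * χ a := by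
    intro K hK χ
    rw [Finset.sum_multiset_map_count]
    rw [Finset.sum_subset hK (fun x _ hx => by
      rw [Multiset.count_eq_zero_of_notMem (fun hm => hx (Multiset.mem_toFinset.mpr hm))]
      simp)]
    exact Finset.sum_congr rfl fun a _ => by rw [nsmul_eq_mul]
  have key : ∀ a ∈ s, ((M.count a : ℂ) - (N.count a : ℂ)) = 0 := by
    refine li s (fun a => (M.count a : ℂ) - (N.count a : ℂ)) ?_
    funext χ
    have hMs := hsum M (Multiset.toFinset_subset.mpr (Multiset.subset_of_le (Multiset.le_add_right M N))) χ
    have hNs := hsum N (Multiset.toFinset_subset.mpr (Multiset.subset_of_le (Multiset.le_add_left N M))) χ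
    have hh := h χ
    rw [hMs, hNs] at hh
    simp only [Finset.sum_apply, Pi.smul_apply, Function.comp_apply, Pi.zero_apply, smul_eq_mul]
    show ∑ a ∈ s, ((M.count a : ℂ) - (N.count a : ℂ)) * χ a = 0
    simp only [sub_mul]
    rw [Finset.sum_sub_distrib, hh, sub_self]
  ext a
  by_cases hmem : a ∈ s
  · have := key a hmem
    have : (M.count a : ℂ) = (N.count a : ℂ) := by linear_combination this
    exact_mod_cast this
  · have hnm : a ∉ M + N := fun hm => hmem (Multiset.mem_toFinset.mpr hm)
    rw [Multiset.mem_add] at hnm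
    push_neg at hnm
    rw [Multiset.count_eq_zero_of_notMem hnm.1, Multiset.count_eq_zero_of_notMem hnm.2]

end CharacterTools

/-! ### Auxiliary material on curves -/

namespace AlgCurve

lemma cls_congr (C : AlgCurve) {D D' : Divisor C} (hDD : D = D')
    (h1 : C.degree D = 0) (h2 : C.degree D' = 0) : C.cls D h1 = C.cls D' h2 := by
  subst hDD; rfl

/-- Effective divisors of degree one are exactly the degree-one points. -/
lemma mem_effOfDeg_one {C : AlgCurve} {D : Divisor C} :
    D ∈ C.effOfDeg 1 ↔ ∃ P : C.Point, C.deg P = 1 ∧ D = Finsupp.single P 1 := by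
  rw [C.mem_effOfDeg]
  constructor
  · rintro ⟨heff, hdeg⟩
    rw [degree_eq_sum] at hdeg
    have hsum : ∑ P ∈ D.support, D P * (C.deg P : ℤ) = 1 := hdeg
    have hterm : ∀ P ∈ D.support, 1 ≤ D P * (C.deg P : ℤ) := by
      intro P hP
      have h1 : 1 ≤ D P := by
        have := heff P
        have := Finsupp.mem_support_iff.mp hP
        omega
      have h2 : 1 ≤ (C.deg P : ℤ) := by exact_mod_cast (C.deg P).one_le
      nlinarith
    have hcard : (D.support.card : ℤ) ≤ 1 := by
      have := Finset.card_nsmul_le_sum D.support (fun P => D P * (C.deg P : ℤ)) 1 hterm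
      rw [hsum] at this
      simpa using this
    have hcard' : D.support.card ≤ 1 := by exact_mod_cast hcard
    interval_cases hc : D.support.card
    · exfalso
      have : D = 0 := Finsupp.support_eq_empty.mp (Finset.card_eq_zero.mp hc)
      rw [this] at hsum
      simp at hsum
    · obtain ⟨P, b, hb, hD⟩ := Finsupp.card_support_eq_one'.mp hc
      have hDb : D P = b := by rw [hD]; simp
      have h1 : 1 ≤ b := by
        have := heff P
        rw [hDb] at this
        omega
      have h2 : 1 ≤ (C.deg P : ℤ) := by exact_mod_cast (C.deg P).one_le
      have hdeg1 : b * (C.deg P : ℤ) = 1 := by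
        rw [hD, Finsupp.support_single_ne_zero _ hb] at hsum
        simpa using hsum
      have hb1 : b = 1 := by nlinarith
      have hdP : (C.deg P : ℤ) = 1 := by nlinarith
      refine ⟨P, ?_, by rw [hD, hb1]⟩
      have : ((C.deg P : ℕ) : ℤ) = ((1 : ℕ+) : ℤ) := by simpa using hdP
      exact_mod_cast this
  · rintro ⟨P, hP, rfl⟩
    classical
    constructor
    · intro Q
      rw [Finsupp.single_apply]
      split <;> omega
    · simp [hP]

/-- The multiset of classes `[D - D₁]` for `D` the effective divisors of degree one
(i.e. the degree one points) of `C`. -/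
noncomputable def ptCls (C : AlgCurve) (D1 : Divisor C) (h1 : C.degree D1 = 1) :
    Multiset C.Pic0 :=
  (C.effOfDeg 1).attach.val.map fun D => C.cls (D.1 - D1) (by
    have := (C.mem_effOfDeg.mp D.2).2
    rw [map_sub, this, h1, sub_self])

lemma mem_ptCls {C : AlgCurve} {D1 : Divisor C} {h1 : C.degree D1 = 1} {x : C.Pic0} :
    x ∈ C.ptCls D1 h1 ↔ ∃ (P : C.Point) (h : C.deg P = 1),
      x = C.cls (Finsupp.single P 1 - D1) (by simp [h, h1]) := by
  rw [ptCls, Multiset.mem_map]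
  constructor
  · rintro ⟨D, _, rfl⟩
    obtain ⟨P, hP, hD⟩ := mem_effOfDeg_one.mp D.2
    exact ⟨P, hP, (C.cls_congr (by rw [hD]) _ _)⟩
  · rintro ⟨P, hP, rfl⟩
    have hmem : Finsupp.single P 1 ∈ C.effOfDeg 1 := mem_effOfDeg_one.mpr ⟨P, hP, rfl⟩
    exact ⟨⟨Finsupp.single P 1, hmem⟩, Multiset.mem_attach _ _, (C.cls_congr rfl _ _)⟩

/-- The coefficient of `t¹` in the `L`-function is the character sum over the degree one
points of the curve. -/
lemma coeff_one_Lfun (C : AlgCurve) (D1 : Divisor C) (h1 : C.degree D1 = 1)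
    (χ : C.Pic0 → ℂ) :
    PowerSeries.coeff 1 (C.Lfun D1 h1 χ) = ((C.ptCls D1 h1).map χ).sum := by
  rw [Lfun, PowerSeries.coeff_mk, ptCls, Multiset.map_map, Finset.sum_eq_multiset_sum]
  apply congrArg Multiset.sum
  apply Multiset.map_congr rfl
  intro D _
  simp only [Function.comp_apply]
  congr 1
  apply cls_congr
  norm_num

end AlgCurve

/-- Let `C` and `C'` be smooth projective curves of genus at least two over
`F_q`, with fixed Abel–Jacobi embeddings into their Jacobians.  Suppose
`ψ : J_C(F̄_q) → J_{C'}(F̄_q)` is a bijection restricting to a group isomorphism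
`J_C(F_{q^n}) → J_{C'}(F_{q^n})` for every `n ≥ 1` (the isomorphisms `e n`), and suppose
that for every `n` and every character `χ` of `J_C(F_{q^n})` the `L`-functions satisfy
`L(t, C ⊗ F_{q^n}, χ) = L(t, C' ⊗ F_{q^n}, χ ∘ ψ⁻¹)`.  Then
`ψ(C(F_{q^n})) = C'(F_{q^n})` for all `n ≥ 1`. -/
theorem psi_maps_curve_points_onto_curve_points
    (S S' : CurveSystem)
    (hg : ∀ n, 2 ≤ (S.C n).genus) (hg' : ∀ n, 2 ≤ (S'.C n).genus)
    (ψ : S.Jbar → S'.Jbar) (hψ : Function.Bijective ψ)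
    (e : ∀ n, (S.C n).Pic0 ≃+ (S'.C n).Pic0)
    (he : ∀ n x, ψ (S.ι n x) = S'.ι n (e n x))
    (hL : ∀ (n : ℕ+) (χ : AddChar ((S.C n).Pic0) ℂ),
      (S.C n).Lfun (S.D1 n) (S.deg_D1 n) (fun x => χ x)
        = (S'.C n).Lfun (S'.D1 n) (S'.deg_D1 n) (fun y => χ ((e n).symm y))) :
    ∀ n : ℕ+, ψ '' S.curvePts n = S'.curvePts n := by
  intro n
  -- the multiset of degree-one point classes is preserved by `e n`
  have hMN : (S.C n).ptCls (S.D1 n) (S.deg_D1 n)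
      = ((S'.C n).ptCls (S'.D1 n) (S'.deg_D1 n)).map (e n).symm := by
    apply multiset_eq_of_addChar_sum_eq
    intro χ
    have hcoeff := congrArg (PowerSeries.coeff 1) (hL n χ)
    rw [AlgCurve.coeff_one_Lfun, AlgCurve.coeff_one_Lfun] at hcoeff
    rw [Multiset.map_map]
    exact hcoeff
  have hMN' : ((S.C n).ptCls (S.D1 n) (S.deg_D1 n)).map (e n)
      = (S'.C n).ptCls (S'.D1 n) (S'.deg_D1 n) := by
    rw [hMN, Multiset.map_map]
    rw [Multiset.map_congr rfl (fun x _ => by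
      show (e n) ((e n).symm x) = id x
      simp)]
    exact Multiset.map_id _
  ext y
  constructor
  · rintro ⟨x, ⟨P, hP, rfl⟩, rfl⟩
    rw [he]
    have hx : (S.C n).cls (Finsupp.single P 1 - S.D1 n) (by simp [hP, S.deg_D1 n])
        ∈ (S.C n).ptCls (S.D1 n) (S.deg_D1 n) := AlgCurve.mem_ptCls.mpr ⟨P, hP, rfl⟩
    have hx' : (e n) ((S.C n).cls (Finsupp.single P 1 - S.D1 n) (by simp [hP, S.deg_D1 n]))
        ∈ (S'.C n).ptCls (S'.D1 n) (S'.deg_D1 n) := by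
      rw [← hMN']
      exact Multiset.mem_map_of_mem _ hx
    obtain ⟨P', hP', hEq⟩ := AlgCurve.mem_ptCls.mp hx'
    exact ⟨P', hP', by rw [hEq]⟩
  · rintro ⟨P', hP', rfl⟩
    have hy : (S'.C n).cls (Finsupp.single P' 1 - S'.D1 n) (by simp [hP', S'.deg_D1 n])
        ∈ (S'.C n).ptCls (S'.D1 n) (S'.deg_D1 n) := AlgCurve.mem_ptCls.mpr ⟨P', hP', rfl⟩
    rw [← hMN'] at hy
    obtain ⟨x, hxmem, hxe⟩ := Multiset.mem_map.mp hy
    obtain ⟨P, hP, hxeq⟩ := AlgCurve.mem_ptCls.mp hxmem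
    refine ⟨S.ι n x, ⟨P, hP, by rw [hxeq]⟩, ?_⟩
    rw [he, hxe]
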